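/- arXiv:2305.11249 — 7 statements merged into one kernel-verified Lean document; each statement's English description precedes it below -/
import Mathlib

section
/- Let m, n be positive integers, ζ ∈ ℂ a primitive m-th root of unity, y ∈ (ℤ/mℤ)^n with exactly t zero coordinates, and 0 ≤ z ≤ n. Then ∑_{x ∈ (ℤ/mℤ)^n with exactly z zero coordinates} ζ^{y·x} = ∑_{ℓ=0}^{n-z} (m-1)^ℓ · (-1)^{n-z-ℓ} · C(t, ℓ) · C(n - t, n - z - ℓ), where y·x = ∑_i y_i x_i. -/
open Finset

private lemma pow_val_mod' {m : ℕ} {ζ : ℂ} (hζ : ζ ^ m = 1) (k : ℕ) :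
    ζ ^ (k % m) = ζ ^ k := by
  conv_rhs => rw [← Nat.div_add_mod k m]
  rw [pow_add, pow_mul, hζ, one_pow, one_mul]

private lemma chi_add' {m : ℕ} [NeZero m] {ζ : ℂ} (hζ : ζ ^ m = 1) (a b : ZMod m) :
    ζ ^ (a + b).val = ζ ^ a.val * ζ ^ b.val := by
  rw [ZMod.val_add, pow_val_mod' hζ, pow_add]

private lemma chi_sum' {m : ℕ} [NeZero m] {ζ : ℂ} (hζ : ζ ^ m = 1) {ι : Type*}
    (s : Finset ι) (f : ι → ZMod m) :
    ζ ^ (∑ i ∈ s, f i).val = ∏ i ∈ s, ζ ^ (f i).val := by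
  induction s using Finset.cons_induction with
  | empty => simp
  | cons a s ha ih => rw [sum_cons, prod_cons, chi_add' hζ, ih]

private lemma sum_univ_zmod {m : ℕ} [NeZero m] (f : ZMod m → ℂ) :
    ∑ a : ZMod m, f a = ∑ k ∈ Finset.range m, f (k : ZMod m) := by
  refine Finset.sum_nbij' (fun a => a.val) (fun k => (k : ZMod m)) ?_ ?_ ?_ ?_ ?_
  · intro a _; exact Finset.mem_range.2 a.val_lt
  · intro k _; exact Finset.mem_univ _
  · intro a _; simp [ZMod.natCast_val, ZMod.cast_id]
  · intro k hk; exact ZMod.val_cast_of_lt (Finset.mem_range.1 hk)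
  · intro a _; simp [ZMod.natCast_val, ZMod.cast_id]

private lemma inner_sum' {m : ℕ} [NeZero m] {ζ : ℂ} (hζ : IsPrimitiveRoot ζ m)
    (b : ZMod m) :
    ∑ a ∈ ({0}ᶜ : Finset (ZMod m)), ζ ^ (b * a).val =
      if b = 0 then (m : ℂ) - 1 else -1 := by
  by_cases hb : b = 0
  · simp only [hb, if_pos, zero_mul, ZMod.val_zero, pow_zero]
    rw [Finset.sum_const, nsmul_eq_mul, mul_one, Finset.card_compl,
      Finset.card_singleton, ZMod.card]
    rw [Nat.cast_sub (NeZero.one_le), Nat.cast_one]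
  · rw [if_neg hb]
    have key : ∀ a : ZMod m, ζ ^ (b * a).val = (ζ ^ b.val) ^ a.val := by
      intro a
      rw [ZMod.val_mul, pow_val_mod' hζ.pow_eq_one, ← pow_mul]
    have hne : ζ ^ b.val ≠ 1 := by
      refine hζ.pow_ne_one_of_pos_of_lt ?_ b.val_lt
      exact fun h => hb ((ZMod.val_eq_zero b).1 h)
    have htot : ∑ a : ZMod m, ζ ^ (b * a).val = 0 := by
      rw [Finset.sum_congr rfl (fun a _ => key a), sum_univ_zmod]
      have hcast : ∀ k ∈ Finset.range m, (ζ ^ b.val) ^ ((k : ZMod m)).val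
          = (ζ ^ b.val) ^ k := by
        intro k hk
        rw [ZMod.val_cast_of_lt (Finset.mem_range.1 hk)]
      rw [Finset.sum_congr rfl hcast, geom_sum_eq hne, ← pow_mul, mul_comm,
        pow_mul, hζ.pow_eq_one, one_pow, sub_self, zero_div]
    have hsplit : ∑ a : ZMod m, ζ ^ (b * a).val
        = ζ ^ (b * 0).val + ∑ a ∈ ({0}ᶜ : Finset (ZMod m)), ζ ^ (b * a).val := by
      rw [← Finset.sum_compl_add_sum ({0} : Finset (ZMod m)), add_comm,
        Finset.sum_singleton]
    rw [hsplit, mul_zero, ZMod.val_zero, pow_zero] at htot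
    linear_combination htot

private lemma count_fiber {n : ℕ} (T : Finset (Fin n)) (k ℓ : ℕ) (hℓ : ℓ ≤ k) :
    ((Finset.powersetCard k (Finset.univ : Finset (Fin n))).filter
      (fun U => (U ∩ T).card = ℓ)).card = T.card.choose ℓ * Tᶜ.card.choose (k - ℓ) := by
  classical
  rw [← Finset.card_powersetCard ℓ T, ← Finset.card_powersetCard (k - ℓ) Tᶜ,
    ← Finset.card_product]
  refine Finset.card_nbij' (fun U => (U ∩ T, U \ T)) (fun p => p.1 ∪ p.2) ?_ ?_ ?_ ?_
  · intro U hU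
    rw [Finset.mem_coe, Finset.mem_filter, Finset.mem_powersetCard_univ] at hU
    obtain ⟨hcard, hinter⟩ := hU
    rw [Finset.mem_coe, Finset.mem_product]
    constructor
    · exact Finset.mem_powersetCard.2 ⟨Finset.inter_subset_right, hinter⟩
    · refine Finset.mem_powersetCard.2 ⟨?_, ?_⟩
      · intro x hx
        rw [Finset.mem_compl]
        exact (Finset.mem_sdiff.1 hx).2
      · show (U \ T).card = k - ℓ
        have := Finset.card_inter_add_card_sdiff U T
        omega
  · intro p hp
    rw [Finset.mem_coe, Finset.mem_product] at hp
    obtain ⟨hA, hB⟩ := hp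
    rw [Finset.mem_powersetCard] at hA hB
    have hdisj : Disjoint p.1 p.2 := by
      rw [Finset.disjoint_left]
      intro x hx1 hx2
      exact (Finset.mem_compl.1 (hB.1 hx2)) (hA.1 hx1)
    rw [Finset.mem_coe, Finset.mem_filter, Finset.mem_powersetCard_univ,
      Finset.card_union_of_disjoint hdisj, hA.2, hB.2]
    refine ⟨by omega, ?_⟩
    have : (p.1 ∪ p.2) ∩ T = p.1 := by
      ext x
      simp only [Finset.mem_inter, Finset.mem_union]
      constructor
      · rintro ⟨hx1 | hx2, hxT⟩
        · exact hx1
        · exact absurd hxT (Finset.mem_compl.1 (hB.1 hx2))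
      · intro hx; exact ⟨Or.inl hx, hA.1 hx⟩
    rw [this, hA.2]
  · intro U _
    exact (Finset.union_comm _ _).trans (Finset.sdiff_union_inter U T)
  · intro p hp
    rw [Finset.mem_coe, Finset.mem_product] at hp
    obtain ⟨hA, hB⟩ := hp
    rw [Finset.mem_powersetCard] at hA hB
    have h1 : (p.1 ∪ p.2) ∩ T = p.1 := by
      ext x
      simp only [Finset.mem_inter, Finset.mem_union]
      constructor
      · rintro ⟨hx1 | hx2, hxT⟩
        · exact hx1
        · exact absurd hxT (Finset.mem_compl.1 (hB.1 hx2))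
      · intro hx; exact ⟨Or.inl hx, hA.1 hx⟩
    have h2 : (p.1 ∪ p.2) \ T = p.2 := by
      ext x
      simp only [Finset.mem_sdiff, Finset.mem_union]
      constructor
      · rintro ⟨hx1 | hx2, hxT⟩
        · exact absurd (hA.1 hx1) hxT
        · exact hx2
      · intro hx; exact ⟨Or.inr hx, Finset.mem_compl.1 (hB.1 hx)⟩
    exact Prod.ext h1 h2

theorem stmt_2 (m n : ℕ) [NeZero m] (hn : 0 < n) (ζ : ℂ) (hζ : IsPrimitiveRoot ζ m)
    (y : Fin n → ZMod m) (t : ℕ)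
    (ht : t = (Finset.univ.filter (fun i => y i = 0)).card)
    (z : ℕ) (hz : z ≤ n) :
    ∑ x ∈ Finset.univ.filter
        (fun x : Fin n → ZMod m => (Finset.univ.filter (fun i => x i = 0)).card = z),
      ζ ^ (∑ i, y i * x i).val =
    ∑ ℓ ∈ Finset.range (n - z + 1),
      ((m : ℂ) - 1) ^ ℓ * (-1) ^ (n - z - ℓ) * (t.choose ℓ) * ((n - t).choose (n - z - ℓ)) := by
  classical
  set T : Finset (Fin n) := Finset.univ.filter (fun i => y i = 0) with hT
  set c : Fin n → ℂ := fun i => if y i = 0 then (m : ℂ) - 1 else -1 with hc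
  -- Step 1: group by the zero set S
  have step1 :
      ∑ x ∈ Finset.univ.filter
          (fun x : Fin n → ZMod m => (Finset.univ.filter (fun i => x i = 0)).card = z),
        ζ ^ (∑ i, y i * x i).val
      = ∑ S ∈ Finset.powersetCard z (Finset.univ : Finset (Fin n)),
          ∑ x ∈ Finset.univ.filter
              (fun x : Fin n → ZMod m => Finset.univ.filter (fun i => x i = 0) = S),
            ζ ^ (∑ i, y i * x i).val := by
    rw [← Finset.sum_fiberwise_of_maps_to
      (g := fun x : Fin n → ZMod m => Finset.univ.filter (fun i => x i = 0))
      (t := Finset.powersetCard z (Finset.univ : Finset (Fin n)))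
      (fun x hx => Finset.mem_powersetCard_univ.2 (Finset.mem_filter.1 hx).2)]
    refine Finset.sum_congr rfl (fun S hS => Finset.sum_congr ?_ (fun _ _ => rfl))
    ext x
    simp only [Finset.mem_filter, Finset.mem_univ, true_and]
    constructor
    · rintro ⟨_, h⟩; exact h
    · intro h; exact ⟨by rw [h]; exact Finset.mem_powersetCard_univ.1 hS, h⟩
  -- Step 2: inner sum is a product over the complement
  have step2 : ∀ S : Finset (Fin n),
      ∑ x ∈ Finset.univ.filter
          (fun x : Fin n → ZMod m => Finset.univ.filter (fun i => x i = 0) = S),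
        ζ ^ (∑ i, y i * x i).val = ∏ i ∈ Sᶜ, c i := by
    intro S
    have hfil : Finset.univ.filter
          (fun x : Fin n → ZMod m => Finset.univ.filter (fun i => x i = 0) = S)
        = Fintype.piFinset (fun i => if i ∈ S then ({0} : Finset (ZMod m)) else {0}ᶜ) := by
      ext x
      simp only [Finset.mem_filter, Finset.mem_univ, true_and, Fintype.mem_piFinset,
        Finset.ext_iff]
      refine forall_congr' (fun i => ?_)
      by_cases hi : i ∈ S <;> simp [hi, Finset.mem_filter]
    rw [hfil]
    have hterm : ∀ x : Fin n → ZMod m,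
        ζ ^ (∑ i, y i * x i).val = ∏ i, ζ ^ (y i * x i).val :=
      fun x => chi_sum' hζ.pow_eq_one _ _
    rw [Finset.sum_congr rfl (fun x _ => hterm x),
      ← Finset.prod_univ_sum (fun i => if i ∈ S then ({0} : Finset (ZMod m)) else {0}ᶜ)
        (fun i a => ζ ^ (y i * a).val)]
    have hfac : ∀ i : Fin n,
        (∑ a ∈ (if i ∈ S then ({0} : Finset (ZMod m)) else {0}ᶜ), ζ ^ (y i * a).val)
        = if i ∈ S then 1 else c i := by
      intro i
      by_cases hi : i ∈ S
      · simp [hi]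
      · rw [if_neg hi, if_neg hi, inner_sum' hζ]
    rw [Finset.prod_congr rfl (fun i _ => hfac i)]
    rw [← Finset.prod_mul_prod_compl S]
    have h1 : ∏ i ∈ S, (if i ∈ S then (1 : ℂ) else c i) = 1 :=
      Finset.prod_eq_one (fun i hi => if_pos hi)
    have h2 : ∏ i ∈ Sᶜ, (if i ∈ S then (1 : ℂ) else c i) = ∏ i ∈ Sᶜ, c i :=
      Finset.prod_congr rfl (fun i hi => if_neg (Finset.mem_compl.1 hi))
    rw [h1, h2, one_mul]
  -- Step 3: reindex S ↦ Sᶜ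
  have step3 :
      ∑ S ∈ Finset.powersetCard z (Finset.univ : Finset (Fin n)), ∏ i ∈ Sᶜ, c i
      = ∑ U ∈ Finset.powersetCard (n - z) (Finset.univ : Finset (Fin n)), ∏ i ∈ U, c i := by
    refine Finset.sum_nbij' (fun S => Sᶜ) (fun U => Uᶜ) ?_ ?_ ?_ ?_ ?_
    · intro S hS
      rw [Finset.mem_powersetCard_univ] at hS ⊢
      rw [Finset.card_compl, Fintype.card_fin, hS]
    · intro U hU
      rw [Finset.mem_powersetCard_univ] at hU ⊢
      rw [Finset.card_compl, Fintype.card_fin, hU]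
      omega
    · intro S _; exact compl_compl S
    · intro U _; exact compl_compl U
    · intro S _; rfl
  -- Step 4: evaluate each product
  have step4 : ∀ U : Finset (Fin n), U.card = n - z →
      ∏ i ∈ U, c i = ((m : ℂ) - 1) ^ (U ∩ T).card * (-1) ^ (n - z - (U ∩ T).card) := by
    intro U hU
    have hsplit : ∏ i ∈ U, c i = (∏ i ∈ U \ T, c i) * ∏ i ∈ U ∩ T, c i := by
      rw [← Finset.prod_union (Finset.disjoint_sdiff_inter U T),
        Finset.sdiff_union_inter]
    rw [hsplit]
    have hA : ∏ i ∈ U ∩ T, c i = ((m : ℂ) - 1) ^ (U ∩ T).card := by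
      rw [← Finset.prod_const]
      refine Finset.prod_congr rfl (fun i hi => ?_)
      have : y i = 0 := by
        have := (Finset.mem_inter.1 hi).2
        rw [hT, Finset.mem_filter] at this
        exact this.2
      simp [hc, this]
    have hB : ∏ i ∈ U \ T, c i = (-1 : ℂ) ^ (n - z - (U ∩ T).card) := by
      have hcard : (U \ T).card = n - z - (U ∩ T).card := by
        have := Finset.card_inter_add_card_sdiff U T
        omega
      rw [← hcard, ← Finset.prod_const]
      refine Finset.prod_congr rfl (fun i hi => ?_)
      have : ¬ y i = 0 := by
        have h := (Finset.mem_sdiff.1 hi).2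
        rw [hT, Finset.mem_filter] at h
        push_neg at h
        intro hy
        exact h (Finset.mem_univ i) hy
      simp [hc, this]
    rw [hA, hB, mul_comm]
  -- Step 5: group over ℓ = |U ∩ T| and count
  have step5 :
      ∑ U ∈ Finset.powersetCard (n - z) (Finset.univ : Finset (Fin n)), ∏ i ∈ U, c i
      = ∑ ℓ ∈ Finset.range (n - z + 1),
          ((m : ℂ) - 1) ^ ℓ * (-1) ^ (n - z - ℓ) * (t.choose ℓ)
            * ((n - t).choose (n - z - ℓ)) := by
    rw [← Finset.sum_fiberwise_of_maps_to
      (g := fun U : Finset (Fin n) => (U ∩ T).card)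
      (t := Finset.range (n - z + 1)) ?_ (fun U => ∏ i ∈ U, c i)]
    · refine Finset.sum_congr rfl (fun ℓ hℓ => ?_)
      rw [Finset.mem_range] at hℓ
      have hval : ∀ U ∈ (Finset.powersetCard (n - z)
          (Finset.univ : Finset (Fin n))).filter (fun U => (U ∩ T).card = ℓ),
          ∏ i ∈ U, c i = ((m : ℂ) - 1) ^ ℓ * (-1) ^ (n - z - ℓ) := by
        intro U hU
        rw [Finset.mem_filter, Finset.mem_powersetCard_univ] at hU
        rw [step4 U hU.1, hU.2]
      rw [Finset.sum_congr rfl hval, Finset.sum_const, nsmul_eq_mul,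
        count_fiber T (n - z) ℓ (by omega)]
      have hTcard : T.card = t := ht.symm
      have hTc : Tᶜ.card = n - t := by
        rw [Finset.card_compl, Fintype.card_fin, hTcard]
      rw [hTcard, hTc, Nat.cast_mul]
      ring
    · intro U hU
      rw [Finset.mem_powersetCard_univ] at hU
      show (U ∩ T).card ∈ Finset.range (n - z + 1)
      rw [Finset.mem_range]
      have := Finset.card_le_card (Finset.inter_subset_left : U ∩ T ⊆ U)
      omega
  rw [step1, Finset.sum_congr rfl (fun S _ => step2 S), step3, step5]
end

section
/- Let m, n be positive integers, k ≤ n, ζ ∈ ℂ a primitive m-th root of unity, and y ∈ (ℤ/mℤ)^n. Then ∑_{x ∈ (ℤ/mℤ)^n} C(Z(x), k) · ζ^{y·x} = m^{n-k} · C(Z(y), n-k), where Z(v) is the number of zero coordinates of v. -/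
open Finset

private lemma pow_mod_aux {m : ℕ} {ζ : ℂ} (hζ : IsPrimitiveRoot ζ m) (a : ℕ) :
    ζ ^ a = ζ ^ (a % m) := by
  conv_lhs => rw [← Nat.mod_add_div a m, pow_add, pow_mul, hζ.pow_eq_one, one_pow, mul_one]

private lemma pow_val_add_aux {m : ℕ} [NeZero m] {ζ : ℂ} (hζ : IsPrimitiveRoot ζ m)
    (u v : ZMod m) : ζ ^ (u + v).val = ζ ^ u.val * ζ ^ v.val := by
  rw [ZMod.val_add, ← pow_mod_aux hζ, pow_add]

private lemma pow_val_sum_aux {m : ℕ} [NeZero m] {ζ : ℂ} (hζ : IsPrimitiveRoot ζ m)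
    {ι : Type*} (s : Finset ι) (g : ι → ZMod m) :
    ζ ^ (∑ i ∈ s, g i).val = ∏ i ∈ s, ζ ^ (g i).val := by
  induction s using Finset.cons_induction with
  | empty => simp
  | cons a s ha ih => rw [Finset.sum_cons, Finset.prod_cons, pow_val_add_aux hζ, ih]

private lemma sum_pow_val_aux {m : ℕ} [NeZero m] {ζ : ℂ} (hζ : IsPrimitiveRoot ζ m)
    (c : ZMod m) : ∑ a : ZMod m, ζ ^ (c * a).val = if c = 0 then (m : ℂ) else 0 := by
  split_ifs with hc
  · subst hc
    simp [ZMod.card]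
  · have key : ∀ a : ZMod m, ζ ^ (c * a).val = (ζ ^ c.val) ^ a.val := by
      intro a
      rw [← pow_mul, ZMod.val_mul, ← pow_mod_aux hζ]
    simp_rw [key]
    have htrans : ∑ a : ZMod m, (ζ ^ c.val) ^ a.val = ∑ j ∈ Finset.range m, (ζ ^ c.val) ^ j := by
      refine Finset.sum_nbij' (fun a => a.val) (fun j => (j : ZMod m)) ?_ ?_ ?_ ?_ ?_
      · intro a _; exact Finset.mem_range.2 a.val_lt
      · intro j _; exact Finset.mem_univ _
      · intro a _; exact ZMod.natCast_rightInverse a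
      · intro j hj; exact ZMod.val_cast_of_lt (Finset.mem_range.1 hj)
      · intro a _; rfl
    rw [htrans, geom_sum_eq (hζ.pow_ne_one_of_pos_of_lt (ZMod.val_pos.2 hc).ne' c.val_lt)]
    rw [← pow_mul, mul_comm, pow_mul, hζ.pow_eq_one, one_pow, sub_self, zero_div]

theorem stmt_3 (m n k : ℕ) [NeZero m] (hn : 0 < n) (hk : k ≤ n)
    (ζ : ℂ) (hζ : IsPrimitiveRoot ζ m) (y : Fin n → ZMod m) :
    ∑ x : Fin n → ZMod m,
      (((Finset.univ.filter (fun i => x i = 0)).card.choose k : ℂ)) * ζ ^ (∑ i, y i * x i).val =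
    (m : ℂ) ^ (n - k) * (((Finset.univ.filter (fun i => y i = 0)).card.choose (n - k) : ℂ)) := by
  classical
  set pk := (Finset.univ : Finset (Fin n)).powersetCard k with hpk
  -- Step 1: expand the binomial coefficient as a sum over k-subsets
  have h1 : ∀ x : Fin n → ZMod m,
      ((Finset.univ.filter (fun i => x i = 0)).card.choose k : ℂ) =
      ∑ S ∈ pk, (if ∀ i ∈ S, x i = 0 then (1 : ℂ) else 0) := by
    intro x
    have hset : (Finset.univ.filter (fun i => x i = 0)).powersetCard k
        = pk.filter (fun S => ∀ i ∈ S, x i = 0) := by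
      ext S
      simp only [Finset.mem_powersetCard, Finset.mem_filter, hpk, Finset.subset_iff,
        Finset.mem_filter, Finset.mem_univ, true_and]
      tauto
    rw [← Finset.card_powersetCard, hset, Finset.card_filter, Nat.cast_sum]
    simp
  simp_rw [h1, Finset.sum_mul]
  rw [Finset.sum_comm]
  -- Step 2: compute the inner sum for each fixed S
  have h2 : ∀ S ∈ pk,
      (∑ x : Fin n → ZMod m, (if ∀ i ∈ S, x i = 0 then (1 : ℂ) else 0) * ζ ^ (∑ i, y i * x i).val)
      = (if ∀ i ∈ Sᶜ, y i = 0 then (1 : ℂ) else 0) * (m : ℂ) ^ (n - k) := by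
    intro S hS
    have hScard : S.card = k := (Finset.mem_powersetCard.1 hS).2
    have hfac := Finset.prod_univ_sum (fun _ : Fin n => (Finset.univ : Finset (ZMod m)))
      (fun i a => (if i ∈ S then (if a = 0 then (1 : ℂ) else 0) else 1) * ζ ^ ((y i * a).val))
    rw [Fintype.piFinset_univ] at hfac
    have hterm : ∀ x : Fin n → ZMod m,
        (∏ i : Fin n, (if i ∈ S then (if x i = 0 then (1 : ℂ) else 0) else 1)
            * ζ ^ ((y i * x i).val))
        = (if ∀ i ∈ S, x i = 0 then (1 : ℂ) else 0) * ζ ^ (∑ i, y i * x i).val := by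
      intro x
      rw [Finset.prod_mul_distrib, ← pow_val_sum_aux hζ]
      congr 1
      rw [Finset.prod_ite_mem, Finset.univ_inter, Finset.prod_boole]
      congr 1
    have hcol : ∀ i : Fin n,
        (∑ a : ZMod m, (if i ∈ S then (if a = 0 then (1 : ℂ) else 0) else 1) * ζ ^ ((y i * a).val))
        = if i ∈ S then (1 : ℂ) else (if y i = 0 then (m : ℂ) else 0) := by
      intro i
      by_cases hi : i ∈ S
      · simp only [hi, if_true]
        rw [Finset.sum_eq_single (0 : ZMod m)]
        · simp
        · intro b _ hb; simp [hb]
        · simp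
      · simp only [hi, if_false, one_mul]
        exact sum_pow_val_aux hζ (y i)
    calc (∑ x : Fin n → ZMod m,
            (if ∀ i ∈ S, x i = 0 then (1 : ℂ) else 0) * ζ ^ (∑ i, y i * x i).val)
        = ∏ i : Fin n, ∑ a : ZMod m,
            (if i ∈ S then (if a = 0 then (1 : ℂ) else 0) else 1) * ζ ^ ((y i * a).val) := by
          rw [hfac]; exact (Finset.sum_congr rfl fun x _ => hterm x).symm
      _ = ∏ i : Fin n, (if i ∈ S then (1 : ℂ) else (if y i = 0 then (m : ℂ) else 0)) := by
          exact Finset.prod_congr rfl fun i _ => hcol i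
      _ = (if ∀ i ∈ Sᶜ, y i = 0 then (1 : ℂ) else 0) * (m : ℂ) ^ (n - k) := by
          rw [← Finset.prod_mul_prod_compl S]
          have : ∀ i ∈ S, (if i ∈ S then (1 : ℂ) else (if y i = 0 then (m : ℂ) else 0)) = 1 := by
            intro i hi; simp [hi]
          rw [Finset.prod_congr rfl this, Finset.prod_const_one, one_mul]
          have : ∀ i ∈ Sᶜ, (if i ∈ S then (1 : ℂ) else (if y i = 0 then (m : ℂ) else 0))
              = (if y i = 0 then (1 : ℂ) else 0) * m := by
            intro i hi
            rw [if_neg (Finset.mem_compl.1 hi)]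
            split_ifs <;> simp
          rw [Finset.prod_congr rfl this, Finset.prod_mul_distrib, Finset.prod_boole,
            Finset.prod_const, Finset.card_compl, Fintype.card_fin, hScard]
          congr 1
          split_ifs <;> rfl
  rw [Finset.sum_congr rfl h2]
  -- Step 3: count the subsets
  rw [← Finset.sum_mul]
  have h3 : (∑ S ∈ pk, (if ∀ i ∈ Sᶜ, y i = 0 then (1 : ℂ) else 0))
      = ((pk.filter (fun S => ∀ i ∈ Sᶜ, y i = 0)).card : ℂ) := by
    rw [Finset.card_filter, Nat.cast_sum]
    simp
  rw [h3]
  have h4 : (pk.filter (fun S => ∀ i ∈ Sᶜ, y i = 0)).card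
      = ((Finset.univ.filter (fun i => y i = 0)).powersetCard (n - k)).card := by
    refine Finset.card_nbij' (fun S => Sᶜ) (fun T => Tᶜ) ?_ ?_ ?_ ?_
    · intro S hS
      obtain ⟨hS1, hS2⟩ := Finset.mem_filter.1 hS
      have hcard : Sᶜ.card = n - k := by
        rw [Finset.card_compl, Fintype.card_fin, (Finset.mem_powersetCard.1 hS1).2]
      refine Finset.mem_powersetCard.2 ⟨?_, hcard⟩
      intro i hi
      exact Finset.mem_filter.2 ⟨Finset.mem_univ _, hS2 i hi⟩
    · intro T hT
      obtain ⟨hT1, hT2⟩ := Finset.mem_powersetCard.1 hT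
      refine Finset.mem_filter.2 ⟨Finset.mem_powersetCard.2 ⟨Finset.subset_univ _, ?_⟩, ?_⟩
      · rw [Finset.card_compl, Fintype.card_fin, hT2, Nat.sub_sub_self hk]
      · intro i hi
        rw [compl_compl] at hi
        exact (Finset.mem_filter.1 (hT1 hi)).2
    · intro S _; exact compl_compl S
    · intro T _; exact compl_compl T
  rw [h4, Finset.card_powersetCard, mul_comm]
end

section
/- Let m, n be positive integers and 0 ≤ k ≤ n. Consider the m^n × m^n complex matrix A indexed by elements of (ℤ/mℤ)^n with entries A_{f,g} = C(Z(g - f), k), where Z counts zero coordinates. Then the rank of A equals ∑_{s=0}^{k} C(n, s) · (m-1)^s, and the dimension of its kernel equals ∑_{t=0}^{n-k-1} C(n, t) · (m-1)^{n-t}. -/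
open Finset Matrix

section PsiSetup
variable (m : ℕ) [NeZero m]

noncomputable def psiC : AddChar (ZMod m) ℂ :=
  AddChar.zmodChar m ((Complex.isPrimitiveRoot_exp m (NeZero.ne m)).pow_eq_one)

lemma psiC_prim : (psiC m).IsPrimitive :=
  AddChar.zmodChar_primitive_of_primitive_root m (Complex.isPrimitiveRoot_exp m (NeZero.ne m))

lemma psiC_eq_one_iff (a : ZMod m) : psiC m a = 1 ↔ a = 0 :=
  AddChar.IsPrimitive.zmod_char_eq_one_iff m (psiC_prim m) a

lemma psiC_sum (c : ZMod m) :
    ∑ a : ZMod m, psiC m (a * c) = if c = 0 then (m : ℂ) else 0 := by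
  classical
  have h1 : ∀ a : ZMod m, psiC m (a * c) = (psiC m).mulShift c a := by
    intro a; rw [AddChar.mulShift_apply, mul_comm]
  simp_rw [h1]
  rw [AddChar.sum_eq_ite]
  have h2 : (psiC m).mulShift c = 0 ↔ c = 0 := by
    constructor
    · intro h
      have := AddChar.eq_zero_iff.mp h 1
      rw [AddChar.mulShift_apply, mul_one, psiC_eq_one_iff] at this
      exact this
    · intro h
      subst h
      rw [AddChar.eq_zero_iff]
      intro x
      rw [AddChar.mulShift_apply, zero_mul, AddChar.map_zero_eq_one]
  simp [h2, ZMod.card]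

end PsiSetup

section Chi
variable {m n : ℕ} [NeZero m]

/-- the character of `(ZMod m)^n` indexed by `c`, evaluated at `f`. -/
noncomputable def chiC (c f : Fin n → ZMod m) : ℂ := ∏ i, psiC m (f i * c i)

lemma chiC_add (c f g : Fin n → ZMod m) : chiC c (f + g) = chiC c f * chiC c g := by
  unfold chiC
  rw [← Finset.prod_mul_distrib]
  refine Finset.prod_congr rfl fun i _ => ?_
  rw [Pi.add_apply, add_mul, AddChar.map_add_eq_mul]

lemma chiC_zero_right (c : Fin n → ZMod m) : chiC c 0 = 1 := by
  unfold chiC; simp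

/-- sum of a coordinate-restricted character over a "cylinder" set -/
lemma chiC_cylinder_sum (c : Fin n → ZMod m) (S : Finset (Fin n)) :
    ∑ f ∈ Fintype.piFinset (fun i => if i ∈ S then ({0} : Finset (ZMod m)) else Finset.univ),
      chiC c f
      = ∏ i ∈ Finset.univ \ S, (if c i = 0 then (m : ℂ) else 0) := by
  classical
  unfold chiC
  rw [← Finset.prod_univ_sum (fun i => if i ∈ S then ({0} : Finset (ZMod m)) else Finset.univ)
    (fun i x => psiC m (x * c i))]
  rw [← Finset.prod_sdiff (Finset.subset_univ S)]
  have hS : ∀ i ∈ S, (∑ x ∈ (if i ∈ S then ({0} : Finset (ZMod m)) else Finset.univ),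
      psiC m (x * c i)) = 1 := by
    intro i hi
    simp [hi]
  have hSc : ∀ i ∈ Finset.univ \ S,
      (∑ x ∈ (if i ∈ S then ({0} : Finset (ZMod m)) else Finset.univ),
      psiC m (x * c i)) = if c i = 0 then (m : ℂ) else 0 := by
    intro i hi
    rw [Finset.mem_sdiff] at hi
    simp only [hi.2, if_false]
    exact psiC_sum m (c i)
  rw [Finset.prod_congr rfl hS, Finset.prod_congr rfl hSc, Finset.prod_const_one, mul_one]

lemma chiC_full_sum (c : Fin n → ZMod m) :
    ∑ f : Fin n → ZMod m, chiC c f = if c = 0 then ((m : ℂ)) ^ n else 0 := by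
  classical
  have := chiC_cylinder_sum c (∅ : Finset (Fin n))
  simp only [Finset.sdiff_empty] at this
  have hpi : Fintype.piFinset (fun i : Fin n =>
      if i ∈ (∅ : Finset (Fin n)) then ({0} : Finset (ZMod m)) else Finset.univ) =
      Finset.univ := by
    ext f; simp
  rw [hpi] at this
  rw [this]
  by_cases hc : c = 0
  · subst hc; simp
  · simp only [hc, if_false]
    obtain ⟨i, hi⟩ : ∃ i, c i ≠ 0 := by
      by_contra h
      push_neg at h
      exact hc (funext h)
    exact Finset.prod_eq_zero (Finset.mem_univ i) (by simp [hi])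
end Chi

section Count
variable (m : ℕ) [NeZero m] (n : ℕ)

lemma count_support_card_eq (s : ℕ) :
    (Finset.univ.filter (fun c : Fin n → ZMod m =>
      (Finset.univ.filter (fun i => c i ≠ 0)).card = s)).card
      = n.choose s * (m - 1) ^ s := by
  classical
  rw [Finset.card_eq_sum_card_fiberwise
    (f := fun c : Fin n → ZMod m => Finset.univ.filter (fun i => c i ≠ 0))
    (t := Finset.powersetCard s Finset.univ)
    (fun c hc => by
      rw [Finset.mem_coe, Finset.mem_filter] at hc
      rw [Finset.mem_coe, Finset.mem_powersetCard_univ]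
      exact hc.2)]
  have hfib : ∀ S ∈ Finset.powersetCard s Finset.univ,
      ((Finset.univ.filter (fun c : Fin n → ZMod m =>
        (Finset.univ.filter (fun i => c i ≠ 0)).card = s)).filter
        (fun c => Finset.univ.filter (fun i => c i ≠ 0) = S)).card = (m - 1) ^ s := by
    intro S hS
    rw [Finset.mem_powersetCard_univ] at hS
    have hset : ((Finset.univ.filter (fun c : Fin n → ZMod m =>
        (Finset.univ.filter (fun i => c i ≠ 0)).card = s)).filter
        (fun c => Finset.univ.filter (fun i => c i ≠ 0) = S))
        = Fintype.piFinset (fun i => if i ∈ S then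
            (Finset.univ \ {0} : Finset (ZMod m)) else {0}) := by
      ext c
      simp only [Finset.mem_filter, Finset.mem_univ, true_and, Fintype.mem_piFinset]
      constructor
      · rintro ⟨-, h⟩ i
        by_cases hi : i ∈ S
        · simp only [hi, if_true, Finset.mem_sdiff, Finset.mem_univ, true_and,
            Finset.mem_singleton]
          rw [← h] at hi
          simpa using (Finset.mem_filter.mp hi).2
        · simp only [hi, if_false, Finset.mem_singleton]
          by_contra hc
          exact hi (h ▸ Finset.mem_filter.mpr ⟨Finset.mem_univ i, hc⟩)
      · intro h
        have hEq : Finset.univ.filter (fun i => c i ≠ 0) = S := by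
          ext i
          simp only [Finset.mem_filter, Finset.mem_univ, true_and]
          have := h i
          by_cases hi : i ∈ S
          · simp only [hi, if_true, Finset.mem_sdiff, Finset.mem_univ, true_and,
              Finset.mem_singleton] at this
            simp [hi, this]
          · simp only [hi, if_false, Finset.mem_singleton] at this
            simp [hi, this]
        exact ⟨by rw [hEq, hS], hEq⟩
    rw [hset, Fintype.card_piFinset]
    have : ∀ i : Fin n, (if i ∈ S then (Finset.univ \ {0} : Finset (ZMod m)) else {0}).card
        = if i ∈ S then m - 1 else 1 := by
      intro i
      by_cases hi : i ∈ S <;> simp [hi, Finset.card_sdiff, ZMod.card]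
    rw [Finset.prod_congr rfl (fun i _ => this i)]
    rw [Finset.prod_ite_mem, Finset.univ_inter, Finset.prod_const, hS]
  rw [Finset.sum_congr rfl hfib, Finset.sum_const, Finset.card_powersetCard,
    Finset.card_univ, Fintype.card_fin, smul_eq_mul]

lemma count_support_card_le (k : ℕ) :
    (Finset.univ.filter (fun c : Fin n → ZMod m =>
      (Finset.univ.filter (fun i => c i ≠ 0)).card ≤ k)).card
      = ∑ s ∈ Finset.range (k + 1), n.choose s * (m - 1) ^ s := by
  classical
  have hmap : ∀ c ∈ Finset.univ.filter (fun c : Fin n → ZMod m =>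
      (Finset.univ.filter (fun i => c i ≠ 0)).card ≤ k),
      (Finset.univ.filter (fun i => c i ≠ 0)).card ∈ Finset.range (k + 1) := by
    intro c hc
    rw [Finset.mem_filter] at hc
    rw [Finset.mem_range]
    omega
  rw [Finset.card_eq_sum_card_fiberwise hmap]
  refine Finset.sum_congr rfl fun s hs => ?_
  rw [Finset.mem_range] at hs
  rw [← count_support_card_eq m n s]
  congr 1
  ext c
  simp only [Finset.mem_filter, Finset.mem_univ, true_and]
  constructor
  · rintro ⟨-, h⟩; exact h
  · intro h; exact ⟨by omega, h⟩
end Count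

section Mat
variable (m n : ℕ) [NeZero m]

noncomputable def BmatC : Matrix (Fin n → ZMod m) (Fin n → ZMod m) ℂ :=
  fun f c => chiC c f

noncomputable def BstarC : Matrix (Fin n → ZMod m) (Fin n → ZMod m) ℂ :=
  fun c f => chiC c (-f)

lemma chiC_comm (c f : Fin n → ZMod m) : chiC c f = chiC f c := by
  unfold chiC
  exact Finset.prod_congr rfl fun i _ => by rw [mul_comm]

lemma BmatC_mul_BstarC : BmatC m n * BstarC m n = ((m : ℂ) ^ n) • 1 := by
  classical
  ext f f'
  rw [Matrix.mul_apply]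
  have h1 : ∀ c : Fin n → ZMod m, BmatC m n f c * BstarC m n c f' = chiC (f - f') c := by
    intro c
    unfold BmatC BstarC
    rw [← chiC_add, chiC_comm, sub_eq_add_neg]
  rw [Finset.sum_congr rfl fun c _ => h1 c, chiC_full_sum (f - f')]
  rw [Matrix.smul_apply, Matrix.one_apply, smul_eq_mul]
  by_cases h : f = f' <;> simp [h, sub_eq_zero]

lemma BmatC_det_isUnit : IsUnit (BmatC m n).det := by
  classical
  have h := congrArg Matrix.det (BmatC_mul_BstarC m n)
  rw [Matrix.det_mul, Matrix.det_smul, Matrix.det_one, mul_one] at h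
  rw [isUnit_iff_ne_zero]
  intro h0
  rw [h0, zero_mul] at h
  have hm : ((m : ℂ) ^ n) ^ Fintype.card (Fin n → ZMod m) ≠ 0 :=
    pow_ne_zero _ (pow_ne_zero _ (Nat.cast_ne_zero.mpr (NeZero.ne m)))
  exact hm h.symm

variable (k : ℕ)

noncomputable def lamC (c : Fin n → ZMod m) : ℂ :=
  ∑ v : Fin n → ZMod m,
    ((Finset.univ.filter (fun i => v i = 0)).card.choose k : ℂ) * chiC c v

lemma lamC_eq (c : Fin n → ZMod m) (hk : k ≤ n) :
    lamC m n k c = (m : ℂ) ^ (n - k) *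
      (((Finset.powersetCard k (Finset.univ : Finset (Fin n))).filter
        (fun S => Finset.univ.filter (fun i => c i ≠ 0) ⊆ S)).card : ℂ) := by
  classical
  unfold lamC
  have hchoose : ∀ v : Fin n → ZMod m,
      ((Finset.univ.filter (fun i => v i = 0)).card.choose k : ℂ)
      = ∑ S ∈ Finset.powersetCard k (Finset.univ : Finset (Fin n)),
          if (∀ i ∈ S, v i = 0) then (1 : ℂ) else 0 := by
    intro v
    rw [← Finset.card_powersetCard]
    have : Finset.powersetCard k (Finset.univ.filter (fun i => v i = 0))
        = (Finset.powersetCard k (Finset.univ : Finset (Fin n))).filter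
            (fun S => ∀ i ∈ S, v i = 0) := by
      ext S
      simp only [Finset.mem_powersetCard, Finset.mem_filter, Finset.subset_iff,
        Finset.mem_filter, Finset.mem_univ, true_and]
      tauto
    rw [this, Finset.card_filter]
    push_cast
    rfl
  simp_rw [hchoose, Finset.sum_mul, ite_mul, one_mul, zero_mul]
  rw [Finset.sum_comm]
  have hinner : ∀ S ∈ Finset.powersetCard k (Finset.univ : Finset (Fin n)),
      (∑ v : Fin n → ZMod m, if (∀ i ∈ S, v i = 0) then chiC c v else 0)
      = if Finset.univ.filter (fun i => c i ≠ 0) ⊆ S then (m : ℂ) ^ (n - k) else 0 := by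
    intro S hS
    rw [Finset.mem_powersetCard_univ] at hS
    rw [← Finset.sum_filter]
    have hfil : (Finset.univ.filter (fun v : Fin n → ZMod m => ∀ i ∈ S, v i = 0))
        = Fintype.piFinset (fun i => if i ∈ S then ({0} : Finset (ZMod m)) else
            Finset.univ) := by
      ext v
      simp only [Finset.mem_filter, Finset.mem_univ, true_and, Fintype.mem_piFinset]
      constructor
      · intro h i
        by_cases hi : i ∈ S <;> simp [hi, h]
      · intro h i hi
        have := h i
        simpa [hi] using this
    rw [hfil, chiC_cylinder_sum]
    by_cases hsupp : Finset.univ.filter (fun i => c i ≠ 0) ⊆ S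
    · rw [if_pos hsupp]
      have hall : ∀ i ∈ Finset.univ \ S, (if c i = 0 then (m : ℂ) else 0) = (m : ℂ) := by
        intro i hi
        rw [Finset.mem_sdiff] at hi
        have : c i = 0 := by
          by_contra hc
          exact hi.2 (hsupp (Finset.mem_filter.mpr ⟨Finset.mem_univ i, hc⟩))
        rw [if_pos this]
      rw [Finset.prod_congr rfl hall, Finset.prod_const,
        Finset.card_sdiff_of_subset (Finset.subset_univ S), Finset.card_univ, Fintype.card_fin, hS]
    · rw [if_neg hsupp]
      obtain ⟨i, hi⟩ := Finset.not_subset.mp hsupp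
      rw [Finset.mem_filter] at hi
      refine Finset.prod_eq_zero (Finset.mem_sdiff.mpr ⟨Finset.mem_univ i, hi.2⟩) ?_
      rw [if_neg hi.1.2]
  rw [Finset.sum_congr rfl hinner, ← Finset.sum_filter, Finset.sum_const, nsmul_eq_mul,
    mul_comm]



lemma lamC_ne_zero_iff (c : Fin n → ZMod m) (hk : k ≤ n) :
    lamC m n k c ≠ 0 ↔ (Finset.univ.filter (fun i => c i ≠ 0)).card ≤ k := by
  classical
  rw [lamC_eq m n k c hk]
  rw [mul_ne_zero_iff]
  have hm : ((m : ℂ) ^ (n - k)) ≠ 0 := pow_ne_zero _ (Nat.cast_ne_zero.mpr (NeZero.ne m))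
  rw [and_iff_right hm]
  have hcast : ((((Finset.powersetCard k (Finset.univ : Finset (Fin n))).filter
      (fun S => Finset.univ.filter (fun i => c i ≠ 0) ⊆ S)).card : ℂ) ≠ 0)
      ↔ ((Finset.powersetCard k (Finset.univ : Finset (Fin n))).filter
      (fun S => Finset.univ.filter (fun i => c i ≠ 0) ⊆ S)).Nonempty := by
    rw [ne_eq, Nat.cast_eq_zero, Finset.card_eq_zero, ← ne_eq,
      Finset.nonempty_iff_ne_empty]
  rw [hcast]
  constructor
  · rintro ⟨S, hS⟩
    rw [Finset.mem_filter, Finset.mem_powersetCard_univ] at hS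
    exact hS.1 ▸ Finset.card_le_card hS.2
  · intro h
    obtain ⟨u, hu1, -, hu3⟩ := Finset.exists_subsuperset_card_eq
      (Finset.subset_univ (Finset.univ.filter (fun i => c i ≠ 0))) h
      (by rw [Finset.card_univ, Fintype.card_fin]; exact hk)
    exact ⟨u, Finset.mem_filter.mpr ⟨Finset.mem_powersetCard_univ.mpr hu3, hu1⟩⟩

lemma eigen_eq (A : Matrix (Fin n → ZMod m) (Fin n → ZMod m) ℂ)
    (hA : ∀ f g, A f g =
      ((Finset.univ.filter (fun i => (g - f) i = 0)).card.choose k : ℂ)) :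
    A * BmatC m n = BmatC m n * Matrix.diagonal (lamC m n k) := by
  classical
  ext f c
  rw [Matrix.mul_apply, Matrix.mul_diagonal]
  simp_rw [hA]
  have hre := Fintype.sum_equiv (Equiv.addLeft f)
    (fun v : Fin n → ZMod m =>
      ((Finset.univ.filter (fun i => ((f + v) - f) i = 0)).card.choose k : ℂ)
        * BmatC m n (f + v) c)
    (fun g : Fin n → ZMod m =>
      ((Finset.univ.filter (fun i => (g - f) i = 0)).card.choose k : ℂ) * BmatC m n g c)
    (fun v => rfl)
  rw [← hre]
  have hsimp : ∀ v : Fin n → ZMod m,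
      ((Finset.univ.filter (fun i => ((f + v) - f) i = 0)).card.choose k : ℂ)
        * BmatC m n (f + v) c
      = BmatC m n f c *
        (((Finset.univ.filter (fun i => v i = 0)).card.choose k : ℂ) * chiC c v) := by
    intro v
    have h1 : Finset.univ.filter (fun i => ((f + v) - f) i = 0)
        = Finset.univ.filter (fun i => v i = 0) := by
      refine Finset.filter_congr fun i _ => ?_
      simp
    rw [h1]
    unfold BmatC
    rw [chiC_add]
    ring
  rw [Finset.sum_congr rfl (fun v _ => hsimp v), ← Finset.mul_sum]
  rfl

end Mat

theorem stmt_6 (m n k : ℕ) [NeZero m] (hn : 0 < n) (hk : k ≤ n)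
    (A : Matrix (Fin n → ZMod m) (Fin n → ZMod m) ℂ)
    (hA : ∀ f g, A f g =
      ((Finset.univ.filter (fun i => (g - f) i = 0)).card.choose k : ℂ)) :
    A.rank = ∑ s ∈ Finset.range (k + 1), n.choose s * (m - 1) ^ s ∧
    Module.finrank ℂ (LinearMap.ker A.mulVecLin) =
      ∑ t ∈ Finset.range (n - k), n.choose t * (m - 1) ^ (n - t) := by
  classical
  have hrank : A.rank = ∑ s ∈ Finset.range (k + 1), n.choose s * (m - 1) ^ s := by
    have h1 : A.rank = (A * BmatC m n).rank :=
      (Matrix.rank_mul_eq_left_of_isUnit_det (BmatC m n) A (BmatC_det_isUnit m n)).symm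
    rw [h1, eigen_eq m n k A hA,
      Matrix.rank_mul_eq_right_of_isUnit_det _ _ (BmatC_det_isUnit m n),
      Matrix.rank_diagonal]
    rw [Fintype.card_subtype]
    rw [show (Finset.univ.filter (fun c : Fin n → ZMod m => lamC m n k c ≠ 0))
        = Finset.univ.filter (fun c : Fin n → ZMod m =>
            (Finset.univ.filter (fun i => c i ≠ 0)).card ≤ k) from by
      ext c
      simp only [Finset.mem_filter, Finset.mem_univ, true_and]
      exact lamC_ne_zero_iff m n k c hk]
    exact count_support_card_le m n k
  refine ⟨hrank, ?_⟩
  have hdim : A.rank + Module.finrank ℂ (LinearMap.ker A.mulVecLin) = m ^ n := by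
    rw [Matrix.rank]
    rw [LinearMap.finrank_range_add_finrank_ker A.mulVecLin]
    rw [Module.finrank_fintype_fun_eq_card, Fintype.card_fun, ZMod.card, Fintype.card_fin]
  -- arithmetic
  set x := m - 1 with hx
  have hm1 : 1 ≤ m := Nat.one_le_iff_ne_zero.mpr (NeZero.ne m)
  have hxm : x + 1 = m := by omega
  have hbin : m ^ n = ∑ s ∈ Finset.range (n + 1), n.choose s * x ^ s := by
    conv_lhs => rw [← hxm]
    rw [add_pow]
    refine Finset.sum_congr rfl fun s hs => ?_
    rw [one_pow, mul_one, Nat.cast_id, mul_comm]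
  have hsplit : ∑ s ∈ Finset.range (n + 1), n.choose s * x ^ s
      = (∑ s ∈ Finset.range (k + 1), n.choose s * x ^ s)
        + ∑ s ∈ Finset.Ico (k + 1) (n + 1), n.choose s * x ^ s := by
    simp only [Finset.range_eq_Ico]
    exact (Finset.sum_Ico_consecutive _ (by omega) (by omega)).symm
  have hreidx : ∑ s ∈ Finset.Ico (k + 1) (n + 1), n.choose s * x ^ s
      = ∑ t ∈ Finset.range (n - k), n.choose t * x ^ (n - t) := by
    refine Finset.sum_nbij' (fun s => n - s) (fun t => n - t) ?_ ?_ ?_ ?_ ?_ <;>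
      intro a ha <;> simp only [Finset.mem_Ico, Finset.mem_range] at * 
    · omega
    · omega
    · omega
    · omega
    · have h1 : n - (n - a) = a := by omega
      rw [h1, Nat.choose_symm (by omega)]
  omega
end

section
/- Let 0 ≤ k ≤ m. For every class function χ: S_m → ℂ and every f with k ≤ f ≤ m, we have C(f, k) · ∑_{σ ∈ S_m, F(σ) = f} χ(σ) = C(m, k) · ∑_{σ ∈ S_{m-k}, F(σ) = f} χ(σ), where S_{m-k} is the subgroup of S_m fixing the points {m-k+1, …, m}, and in the right-hand sum F(σ) counts all fixed points of σ as an element of S_m (which equals k plus its fixed points in {1,…,m-k}). -/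
theorem exists_perm_finset {α : Type*} [Fintype α] [DecidableEq α] (s t : Finset α)
    (h : s.card = t.card) : ∃ τ : Equiv.Perm α, ∀ a, a ∈ s ↔ τ a ∈ t := by
  have e : {a // a ∈ s} ≃ {a // a ∈ t} := by
    apply Fintype.equivOfCardEq; simp [Fintype.card_coe, h]
  have e' : {a // ¬ a ∈ s} ≃ {a // ¬ a ∈ t} := by
    apply Fintype.equivOfCardEq
    rw [Fintype.card_subtype_compl, Fintype.card_subtype_compl]
    simp [Fintype.card_coe, h]
  refine ⟨Equiv.subtypeCongr e e', fun a => ?_⟩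
  by_cases ha : a ∈ s
  · simp only [Equiv.subtypeCongr, Equiv.trans_apply,
      Equiv.sumCompl_symm_apply_of_pos ha, Equiv.sumCongr_apply, Sum.map_inl,
      Equiv.sumCompl_apply_inl]
    simp [ha, (e ⟨a, ha⟩).2]
  · simp only [Equiv.subtypeCongr, Equiv.trans_apply,
      Equiv.sumCompl_symm_apply_of_neg ha, Equiv.sumCongr_apply, Sum.map_inr,
      Equiv.sumCompl_apply_inr]
    simp [ha, (e' ⟨a, ha⟩).2]

theorem fix_conj {α : Type*} [Fintype α] [DecidableEq α] (σ τ : Equiv.Perm α) :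
    Finset.univ.filter (fun i => (τ * σ * τ⁻¹) i = i)
      = (Finset.univ.filter (fun i => σ i = i)).image τ := by
  ext i
  simp only [Finset.mem_filter, Finset.mem_image, Finset.mem_univ, true_and,
    Equiv.Perm.mul_apply]
  constructor
  · intro h
    refine ⟨τ⁻¹ i, τ.injective ?_, by simp⟩
    simpa using (Finset.mem_filter.mp h).2
  · rintro ⟨j, hj, rfl⟩
    exact Finset.mem_filter.mpr ⟨Finset.mem_univ _, by simp [hj]⟩

theorem fix_conj_card {α : Type*} [Fintype α] [DecidableEq α] (σ τ : Equiv.Perm α) :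
    (Finset.univ.filter (fun i => (τ * σ * τ⁻¹) i = i)).card
      = (Finset.univ.filter (fun i => σ i = i)).card := by
  rw [fix_conj, Finset.card_image_of_injective _ τ.injective]

theorem sum_conj {α : Type*} [Fintype α] [DecidableEq α] (f : ℕ) (χ : Equiv.Perm α → ℂ)
    (hχ : ∀ σ τ : Equiv.Perm α, χ (τ * σ * τ⁻¹) = χ σ) (T : Finset α) (τ : Equiv.Perm α) :
    ∑ σ ∈ Finset.univ.filter (fun σ : Equiv.Perm α =>
        (∀ i ∈ T.image τ, σ i = i) ∧ (Finset.univ.filter (fun i => σ i = i)).card = f), χ σ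
      = ∑ σ ∈ Finset.univ.filter (fun σ : Equiv.Perm α =>
        (∀ i ∈ T, σ i = i) ∧ (Finset.univ.filter (fun i => σ i = i)).card = f), χ σ := by
  have hχ' : ∀ σ : Equiv.Perm α, χ (τ⁻¹ * σ * τ) = χ σ := by
    intro σ
    have h2 := hχ (τ⁻¹ * σ * τ) τ
    have h3 : τ * (τ⁻¹ * σ * τ) * τ⁻¹ = σ := by group
    rw [h3] at h2
    exact h2.symm
  refine Finset.sum_nbij' (fun σ => τ⁻¹ * σ * τ) (fun σ => τ * σ * τ⁻¹) ?_ ?_ ?_ ?_ ?_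
  · intro σ hσ
    simp only [Finset.mem_filter, Finset.mem_univ, true_and] at hσ ⊢
    obtain ⟨h1, h2⟩ := hσ
    constructor
    · intro i hi
      have : σ (τ i) = τ i := h1 (τ i) (Finset.mem_image_of_mem τ hi)
      simp [Equiv.Perm.mul_apply, this]
    · have : τ⁻¹ * σ * τ = τ⁻¹ * σ * (τ⁻¹)⁻¹ := by simp
      rw [this, fix_conj_card]; exact h2
  · intro σ hσ
    simp only [Finset.mem_filter, Finset.mem_univ, true_and] at hσ ⊢
    obtain ⟨h1, h2⟩ := hσ
    constructor
    · rintro i hi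
      simp only [Finset.mem_image] at hi
      obtain ⟨j, hj, rfl⟩ := hi
      have : σ j = j := h1 j hj
      simp [Equiv.Perm.mul_apply, this]
    · rw [fix_conj_card]; exact h2
  · intro σ _; group
  · intro σ _; group
  · intro σ _; exact (hχ' σ).symm

theorem stmt_10 (m k f : ℕ) (hk : k ≤ f) (hf : f ≤ m)
    (χ : Equiv.Perm (Fin m) → ℂ)
    (hχ : ∀ σ τ : Equiv.Perm (Fin m), χ (τ * σ * τ⁻¹) = χ σ) :
    (f.choose k : ℂ) *
      ∑ σ ∈ Finset.univ.filter
          (fun σ : Equiv.Perm (Fin m) =>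
            (Finset.univ.filter (fun i => σ i = i)).card = f), χ σ =
    (m.choose k : ℂ) *
      ∑ σ ∈ Finset.univ.filter
          (fun σ : Equiv.Perm (Fin m) =>
            (∀ i : Fin m, m - k ≤ (i : ℕ) → σ i = i) ∧
            (Finset.univ.filter (fun i => σ i = i)).card = f), χ σ := by
  have hkm : k ≤ m := hk.trans hf
  set T₀ : Finset (Fin m) := Finset.univ.filter (fun i : Fin m => m - k ≤ (i : ℕ)) with hT₀def
  have hT₀ : T₀.card = k := by
    rcases Nat.eq_zero_or_pos k with rfl | hkpos
    · rw [Finset.card_eq_zero, Finset.filter_eq_empty_iff]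
      intro i _; simp
    · have : T₀ = (Finset.Ici (⟨m - k, by omega⟩ : Fin m)) := by
        ext i; simp [hT₀def, Fin.le_def]
      rw [this, Fin.card_Ici]
      simp; omega
  -- A T notation
  have key : ∀ T ∈ Finset.powersetCard k (Finset.univ : Finset (Fin m)),
      (∑ σ ∈ Finset.univ.filter (fun σ : Equiv.Perm (Fin m) =>
        (∀ i ∈ T, σ i = i) ∧ (Finset.univ.filter (fun i => σ i = i)).card = f), χ σ)
      = ∑ σ ∈ Finset.univ.filter (fun σ : Equiv.Perm (Fin m) =>
        (∀ i ∈ T₀, σ i = i) ∧ (Finset.univ.filter (fun i => σ i = i)).card = f), χ σ := by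
    intro T hT
    rw [Finset.mem_powersetCard] at hT
    obtain ⟨τ, hτ⟩ := exists_perm_finset T₀ T (by rw [hT₀, hT.2])
    have himg : T₀.image τ = T := by
      apply Finset.eq_of_subset_of_card_le
      · intro a ha
        simp only [Finset.mem_image] at ha
        obtain ⟨b, hb, rfl⟩ := ha
        exact (hτ b).1 hb
      · rw [Finset.card_image_of_injective _ τ.injective, hT₀, hT.2]
    rw [← himg]
    have := sum_conj f χ hχ T₀ τ
    convert this using 2 <;> congr!
  have step3 : ∑ T ∈ Finset.powersetCard k (Finset.univ : Finset (Fin m)),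
      (∑ σ ∈ Finset.univ.filter (fun σ : Equiv.Perm (Fin m) =>
        (∀ i ∈ T, σ i = i) ∧ (Finset.univ.filter (fun i => σ i = i)).card = f), χ σ)
      = (m.choose k : ℂ) * ∑ σ ∈ Finset.univ.filter (fun σ : Equiv.Perm (Fin m) =>
        (∀ i ∈ T₀, σ i = i) ∧ (Finset.univ.filter (fun i => σ i = i)).card = f), χ σ := by
    rw [Finset.sum_congr rfl key, Finset.sum_const, Finset.card_powersetCard,
      Finset.card_univ, Fintype.card_fin, nsmul_eq_mul]
  have step4 : ∑ T ∈ Finset.powersetCard k (Finset.univ : Finset (Fin m)),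
      (∑ σ ∈ Finset.univ.filter (fun σ : Equiv.Perm (Fin m) =>
        (∀ i ∈ T, σ i = i) ∧ (Finset.univ.filter (fun i => σ i = i)).card = f), χ σ)
      = (f.choose k : ℂ) * ∑ σ ∈ Finset.univ.filter (fun σ : Equiv.Perm (Fin m) =>
          (Finset.univ.filter (fun i => σ i = i)).card = f), χ σ := by
    have hrw : ∀ T : Finset (Fin m),
        Finset.univ.filter (fun σ : Equiv.Perm (Fin m) =>
          (∀ i ∈ T, σ i = i) ∧ (Finset.univ.filter (fun i => σ i = i)).card = f)
        = (Finset.univ.filter (fun σ : Equiv.Perm (Fin m) =>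
            (Finset.univ.filter (fun i => σ i = i)).card = f)).filter
            (fun σ => T ⊆ Finset.univ.filter (fun i => σ i = i)) := by
      intro T
      ext σ
      simp only [Finset.mem_filter, Finset.mem_univ, true_and, Finset.subset_iff,
        Finset.mem_filter]
      tauto
    calc ∑ T ∈ Finset.powersetCard k (Finset.univ : Finset (Fin m)),
          (∑ σ ∈ Finset.univ.filter (fun σ : Equiv.Perm (Fin m) =>
            (∀ i ∈ T, σ i = i) ∧ (Finset.univ.filter (fun i => σ i = i)).card = f), χ σ)
        = ∑ T ∈ Finset.powersetCard k (Finset.univ : Finset (Fin m)),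
          ∑ σ ∈ Finset.univ.filter (fun σ : Equiv.Perm (Fin m) =>
            (Finset.univ.filter (fun i => σ i = i)).card = f),
            (if T ⊆ Finset.univ.filter (fun i => σ i = i) then χ σ else 0) := by
          refine Finset.sum_congr rfl fun T _ => ?_
          rw [hrw T, Finset.sum_filter]
      _ = ∑ σ ∈ Finset.univ.filter (fun σ : Equiv.Perm (Fin m) =>
            (Finset.univ.filter (fun i => σ i = i)).card = f),
          ∑ T ∈ Finset.powersetCard k (Finset.univ : Finset (Fin m)),
            (if T ⊆ Finset.univ.filter (fun i => σ i = i) then χ σ else 0) :=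
          Finset.sum_comm
      _ = ∑ σ ∈ Finset.univ.filter (fun σ : Equiv.Perm (Fin m) =>
            (Finset.univ.filter (fun i => σ i = i)).card = f),
            (f.choose k : ℂ) * χ σ := by
          refine Finset.sum_congr rfl fun σ hσ => ?_
          simp only [Finset.mem_filter, Finset.mem_univ, true_and] at hσ
          rw [← Finset.sum_filter]
          have : (Finset.powersetCard k (Finset.univ : Finset (Fin m))).filter
              (fun T => T ⊆ Finset.univ.filter (fun i => σ i = i))
              = Finset.powersetCard k (Finset.univ.filter (fun i => σ i = i)) := by
            ext T
            simp only [Finset.mem_filter, Finset.mem_powersetCard]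
            constructor
            · rintro ⟨⟨_, h2⟩, h3⟩; exact ⟨h3, h2⟩
            · rintro ⟨h1, h2⟩; exact ⟨⟨Finset.subset_univ T, h2⟩, h1⟩
          rw [this, Finset.sum_const, Finset.card_powersetCard, hσ, nsmul_eq_mul]
      _ = (f.choose k : ℂ) * ∑ σ ∈ Finset.univ.filter (fun σ : Equiv.Perm (Fin m) =>
            (Finset.univ.filter (fun i => σ i = i)).card = f), χ σ := by
          rw [Finset.mul_sum]
  have hset : Finset.univ.filter (fun σ : Equiv.Perm (Fin m) =>
      (∀ i : Fin m, m - k ≤ (i : ℕ) → σ i = i) ∧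
      (Finset.univ.filter (fun i => σ i = i)).card = f)
      = Finset.univ.filter (fun σ : Equiv.Perm (Fin m) =>
        (∀ i ∈ T₀, σ i = i) ∧ (Finset.univ.filter (fun i => σ i = i)).card = f) := by
    ext σ
    simp [hT₀def]
  rw [hset, ← step3, step4]
end

section
/- Let m be a positive integer and 0 ≤ k ≤ m. For every irreducible complex character χ of S_m, the quantity λ_χ = (1/χ(1)) · ∑_{σ ∈ S_m} C(F(σ), k) · χ(σ) is a non-negative rational number (in fact a non-negative integer), where F(σ) is the number of fixed points of σ. -/
private lemma trace_idem {d : ℕ} (P : Matrix (Fin d) (Fin d) ℂ) (h : P * P = P) :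
    ∃ r : ℕ, P.trace = r := by
  have hf : (Matrix.mulVecLin P) ∘ₗ (Matrix.mulVecLin P) = Matrix.mulVecLin P := by
    rw [← Matrix.mulVecLin_mul, h]
  obtain ⟨p, hp⟩ := (LinearMap.isProj_iff_isIdempotentElem _).mpr hf
  refine ⟨Module.finrank ℂ p, ?_⟩
  have h2 : LinearMap.trace ℂ _ (Matrix.mulVecLin P) = P.trace := by
    rw [LinearMap.trace_eq_matrix_trace ℂ (Pi.basisFun ℂ (Fin d)),
      LinearMap.toMatrix_eq_toMatrix', ← Matrix.toLin'_apply', LinearMap.toMatrix'_toLin']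
  rw [← h2, hp.trace]

private lemma schur {m d : ℕ} (hd : 0 < d)
    (ρ : Equiv.Perm (Fin m) →* Matrix (Fin d) (Fin d) ℂ)
    (hirr : ∀ U : Submodule ℂ (Fin d → ℂ),
      (∀ σ : Equiv.Perm (Fin m), U.map (Matrix.mulVecLin (ρ σ)) ≤ U) → U = ⊥ ∨ U = ⊤)
    (T : Matrix (Fin d) (Fin d) ℂ) (hcomm : ∀ σ, ρ σ * T = T * ρ σ) :
    ∃ c : ℂ, T = c • (1 : Matrix (Fin d) (Fin d) ℂ) := by
  haveI : Nonempty (Fin d) := Fin.pos_iff_nonempty.mp hd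
  obtain ⟨c, hc⟩ := Module.End.exists_eigenvalue (Matrix.mulVecLin T)
  refine ⟨c, ?_⟩
  have hinv : ∀ σ : Equiv.Perm (Fin m),
      (Module.End.eigenspace (Matrix.mulVecLin T) c).map (Matrix.mulVecLin (ρ σ))
        ≤ Module.End.eigenspace (Matrix.mulVecLin T) c := by
    intro σ
    rintro x ⟨y, hy, rfl⟩
    rw [Module.End.mem_eigenspace_iff]
    have hy' : Matrix.mulVecLin T y = c • y := Module.End.mem_eigenspace_iff.mp hy
    have : Matrix.mulVecLin T ((Matrix.mulVecLin (ρ σ)) y)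
        = Matrix.mulVecLin (ρ σ) (Matrix.mulVecLin T y) := by
      have := congrArg Matrix.mulVecLin (hcomm σ)
      rw [Matrix.mulVecLin_mul, Matrix.mulVecLin_mul] at this
      exact (LinearMap.congr_fun this y).symm
    rw [this, hy', map_smul]
  have hU : Module.End.eigenspace (Matrix.mulVecLin T) c = ⊤ := by
    rcases hirr _ hinv with h | h
    · exact absurd h hc
    · exact h
  apply Matrix.toLin'.injective
  apply LinearMap.ext
  intro x
  have hx : x ∈ Module.End.eigenspace (Matrix.mulVecLin T) c := hU ▸ Submodule.mem_top
  rw [Module.End.mem_eigenspace_iff] at hx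
  simp only [Matrix.toLin'_apply'] at hx ⊢
  rw [hx]
  simp [Matrix.mulVecLin_apply, Matrix.smul_mulVec, Matrix.one_mulVec]

private lemma count_fix {m k : ℕ} (σ : Equiv.Perm (Fin m)) :
    (Finset.univ.filter (fun f : Fin k ↪ Fin m => ∀ i, σ (f i) = f i)).card
      = Nat.factorial k * ((Finset.univ.filter (fun i => σ i = i)).card.choose k) := by
  rw [← Fintype.card_subtype]
  have e : {f : Fin k ↪ Fin m // ∀ i, σ (f i) = f i} ≃ (Fin k ↪ {x : Fin m // σ x = x}) :=
    { toFun := fun p => ⟨fun i => ⟨p.1 i, p.2 i⟩, fun i j h => p.1.injective (by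
        simpa using congrArg Subtype.val h)⟩
      invFun := fun g => ⟨⟨fun i => (g i).1, fun i j h => g.injective (Subtype.ext h)⟩,
        fun i => (g i).2⟩
      left_inv := fun p => by ext i; rfl
      right_inv := fun g => by ext i; rfl }
  rw [Fintype.card_congr e, Fintype.card_embedding_eq, Fintype.card_fin,
    Fintype.card_subtype, Nat.descFactorial_eq_factorial_mul_choose]

private lemma stab_trace {m k d : ℕ} (ρ : Equiv.Perm (Fin m) →* Matrix (Fin d) (Fin d) ℂ)
    (f : Fin k ↪ Fin m) :
    ∃ r : ℕ, (∑ σ ∈ Finset.univ.filter (fun σ : Equiv.Perm (Fin m) => ∀ i, σ (f i) = f i),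
      ρ σ).trace = r := by
  classical
  set H := Finset.univ.filter (fun σ : Equiv.Perm (Fin m) => ∀ i, σ (f i) = f i) with hH
  set Z := ∑ σ ∈ H, ρ σ with hZ
  have h1 : (1 : Equiv.Perm (Fin m)) ∈ H := by simp [hH]
  have hn : 0 < H.card := Finset.card_pos.mpr ⟨1, h1⟩
  have hmem : ∀ {σ τ : Equiv.Perm (Fin m)}, σ ∈ H → τ ∈ H → σ * τ ∈ H := by
    intro σ τ hσ hτ
    simp only [hH, Finset.mem_filter, Finset.mem_univ, true_and] at *
    intro i
    simp [Equiv.Perm.mul_apply, hτ i, hσ i]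
  have hinvmem : ∀ {σ : Equiv.Perm (Fin m)}, σ ∈ H → σ⁻¹ ∈ H := by
    intro σ hσ
    simp only [hH, Finset.mem_filter, Finset.mem_univ, true_and] at *
    intro i
    conv_lhs => rw [← hσ i]
    simp
  have hZZ : Z * Z = (H.card : ℂ) • Z := by
    rw [hZ, Finset.sum_mul]
    have : ∀ σ ∈ H, ρ σ * Z = Z := by
      intro σ hσ
      rw [hZ, Finset.mul_sum]
      refine Finset.sum_nbij' (fun τ => σ * τ) (fun τ => σ⁻¹ * τ) ?_ ?_ ?_ ?_ ?_
      · intro τ hτ; exact hmem hσ hτ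
      · intro τ hτ; exact hmem (hinvmem hσ) hτ
      · intro τ _; group
      · intro τ _; group
      · intro τ _; rw [map_mul]
    rw [Finset.sum_congr rfl this, Finset.sum_const, ← Nat.cast_smul_eq_nsmul ℂ]
  have hne : ((H.card : ℂ)) ≠ 0 := Nat.cast_ne_zero.mpr hn.ne'
  set P := ((H.card : ℂ))⁻¹ • Z with hP
  have hPP : P * P = P := by
    rw [hP, smul_mul_smul_comm, hZZ, smul_smul]
    congr 1
    field_simp
  obtain ⟨r, hr⟩ := trace_idem P hPP
  refine ⟨H.card * r, ?_⟩
  have : Z = (H.card : ℂ) • P := by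
    rw [hP, smul_smul, mul_inv_cancel₀ hne, one_smul]
  rw [this, Matrix.trace_smul, hr, smul_eq_mul]
  push_cast
  ring

private lemma int_c {m d : ℕ} (hd : 0 < d)
    (ρ : Equiv.Perm (Fin m) →* Matrix (Fin d) (Fin d) ℂ)
    (coeff : Equiv.Perm (Fin m) → ℕ) (c : ℂ)
    (hT : ∑ σ : Equiv.Perm (Fin m), (coeff σ : ℂ) • ρ σ = c • (1 : Matrix (Fin d) (Fin d) ℂ)) :
    IsIntegral ℤ c := by
  classical
  set A := Algebra.adjoin ℤ (Set.range ρ) with hA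
  have hspan : Subalgebra.toSubmodule A = Submodule.span ℤ (Set.range ρ) := by
    rw [hA, Algebra.adjoin_eq_span]
    congr 1
    rw [← MonoidHom.coe_mrange, Submonoid.closure_eq, MonoidHom.coe_mrange]
  have hfg : (Subalgebra.toSubmodule A).FG := by
    rw [hspan]
    exact Submodule.fg_span (Set.finite_range ρ)
  have hmem : (∑ σ : Equiv.Perm (Fin m), (coeff σ : ℂ) • ρ σ) ∈ A := by
    have : (∑ σ : Equiv.Perm (Fin m), (coeff σ : ℂ) • ρ σ)
        ∈ Submodule.span ℤ (Set.range ρ) := by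
      apply Submodule.sum_mem
      intro σ _
      rw [Nat.cast_smul_eq_nsmul, ← natCast_zsmul]
      exact Submodule.smul_mem _ _ (Submodule.subset_span ⟨σ, rfl⟩)
    rw [← hspan] at this
    exact this
  have hTint : IsIntegral ℤ (∑ σ : Equiv.Perm (Fin m), (coeff σ : ℂ) • ρ σ) :=
    IsIntegral.of_mem_of_fg A hfg _ hmem
  rw [hT] at hTint
  have halg : c • (1 : Matrix (Fin d) (Fin d) ℂ)
      = algebraMap ℂ (Matrix (Fin d) (Fin d) ℂ) c := (Algebra.algebraMap_eq_smul_one c).symm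
  rw [halg] at hTint
  have hinj : Function.Injective (algebraMap ℂ (Matrix (Fin d) (Fin d) ℂ)) := by
    intro a b hab
    have := congrArg (fun M => M ⟨0, hd⟩ ⟨0, hd⟩) hab
    simpa [Algebra.algebraMap_eq_smul_one, Matrix.smul_apply, Matrix.one_apply_eq] using this
  exact (isIntegral_algebraMap_iff hinj).mp hTint

private lemma F_conj {m : ℕ} (τ σ : Equiv.Perm (Fin m)) :
    (Finset.univ.filter (fun i => (τ * σ * τ⁻¹) i = i)).card
      = (Finset.univ.filter (fun i => σ i = i)).card := by
  rw [show Finset.univ.filter (fun i => (τ * σ * τ⁻¹) i = i)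
      = (Finset.univ.filter (fun i => σ i = i)).map τ.toEmbedding from ?_, Finset.card_map]
  ext j
  simp only [Finset.mem_map, Finset.mem_filter, Finset.mem_univ, true_and,
    Equiv.coe_toEmbedding, Equiv.Perm.mul_apply]
  constructor
  · intro h
    refine ⟨τ⁻¹ j, ?_, by simp⟩
    apply τ.injective
    simpa using (Finset.mem_filter.mp h).2
  · rintro ⟨i, hi, rfl⟩
    exact Finset.mem_filter.mpr ⟨Finset.mem_univ _, by simp [hi]⟩

theorem stmt_17 (m k : ℕ) (hm : 0 < m) (hk : k ≤ m)
    (d : ℕ) (hd : 0 < d)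
    (ρ : Equiv.Perm (Fin m) →* Matrix (Fin d) (Fin d) ℂ)
    (hirr : ∀ U : Submodule ℂ (Fin d → ℂ),
      (∀ σ : Equiv.Perm (Fin m), U.map (Matrix.mulVecLin (ρ σ)) ≤ U) → U = ⊥ ∨ U = ⊤) :
    ∃ N : ℕ,
      (1 / (ρ 1).trace) *
        ∑ σ : Equiv.Perm (Fin m),
          (((Finset.univ.filter (fun i => σ i = i)).card.choose k : ℂ)) * (ρ σ).trace =
      (N : ℂ) := by
  classical
  set co : Equiv.Perm (Fin m) → ℕ :=
    fun σ => (Finset.univ.filter (fun i => σ i = i)).card.choose k with hco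
  set T : Matrix (Fin d) (Fin d) ℂ := ∑ σ : Equiv.Perm (Fin m), (co σ : ℂ) • ρ σ with hT
  set S : ℂ := ∑ σ : Equiv.Perm (Fin m), (co σ : ℂ) * (ρ σ).trace with hS
  -- commutation
  have hcomm : ∀ τ : Equiv.Perm (Fin m), ρ τ * T = T * ρ τ := by
    intro τ
    rw [hT, Finset.mul_sum, Finset.sum_mul]
    refine Fintype.sum_equiv ((Equiv.mulLeft τ).trans (Equiv.mulRight τ⁻¹)) _ _ (fun σ => ?_)
    simp only [Equiv.trans_apply, Equiv.coe_mulLeft, Equiv.coe_mulRight]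
    rw [mul_smul_comm, smul_mul_assoc, ← map_mul, ← map_mul, hco]
    simp only [F_conj τ σ]
    congr 2
    group
  -- Schur
  obtain ⟨c, hc⟩ := schur hd ρ hirr T hcomm
  have hd' : ((d : ℂ)) ≠ 0 := Nat.cast_ne_zero.mpr hd.ne'
  have hTtr : T.trace = S := by
    rw [hT, hS, Matrix.trace_sum]
    exact Finset.sum_congr rfl fun σ _ => by rw [Matrix.trace_smul, smul_eq_mul]
  have hSc : S = c * d := by
    rw [← hTtr, hc, Matrix.trace_smul, Matrix.trace_one, smul_eq_mul, Fintype.card_fin]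
  -- positivity / rationality
  have hsum : ∃ R : ℕ, (Nat.factorial k : ℂ) * S = R := by
    have step1 : (Nat.factorial k : ℂ) * S
        = ∑ σ : Equiv.Perm (Fin m),
            (((Finset.univ.filter
              (fun f : Fin k ↪ Fin m => ∀ i, σ (f i) = f i)).card : ℂ)) * (ρ σ).trace := by
      rw [hS, Finset.mul_sum]
      refine Finset.sum_congr rfl fun σ _ => ?_
      rw [count_fix σ, ← mul_assoc, hco]
      push_cast
      ring
    have step2 : ∀ σ : Equiv.Perm (Fin m),
        (((Finset.univ.filter
          (fun f : Fin k ↪ Fin m => ∀ i, σ (f i) = f i)).card : ℂ)) * (ρ σ).trace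
        = ∑ f ∈ Finset.univ.filter (fun f : Fin k ↪ Fin m => ∀ i, σ (f i) = f i),
            (ρ σ).trace := by
      intro σ
      rw [Finset.sum_const, nsmul_eq_mul]
    have step3 : (Nat.factorial k : ℂ) * S
        = ∑ f : Fin k ↪ Fin m,
            ∑ σ ∈ Finset.univ.filter (fun σ : Equiv.Perm (Fin m) => ∀ i, σ (f i) = f i),
              (ρ σ).trace := by
      rw [step1, Finset.sum_congr rfl fun σ _ => step2 σ]
      exact Finset.sum_comm' (by simp)
    choose r hr using fun f : Fin k ↪ Fin m => stab_trace ρ f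
    refine ⟨∑ f : Fin k ↪ Fin m, r f, ?_⟩
    rw [step3, Nat.cast_sum]
    refine Finset.sum_congr rfl fun f _ => ?_
    rw [← hr f, Matrix.trace_sum]
  obtain ⟨R, hR⟩ := hsum
  have hkf : ((Nat.factorial k : ℂ)) ≠ 0 := Nat.cast_ne_zero.mpr (Nat.factorial_ne_zero k)
  -- c as a rational
  set q : ℚ := (R : ℚ) / (Nat.factorial k * d) with hq
  have hcq : c = (q : ℂ) := by
    have : (Nat.factorial k : ℂ) * (c * d) = R := by rw [← hSc, hR]
    rw [hq]
    push_cast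
    field_simp
    field_simp at this
    linear_combination this
  -- integrality
  have hci : IsIntegral ℤ c := int_c hd ρ co c hc
  rw [hcq] at hci
  have hqc : algebraMap ℚ ℂ q = (q : ℂ) := by
    exact eq_ratCast ((algebraMap ℚ ℂ)) q
  rw [← hqc] at hci
  have hqi : IsIntegral ℤ q :=
    (isIntegral_algebraMap_iff ((algebraMap ℚ ℂ).injective)).mp hci
  obtain ⟨z, hz⟩ := IsIntegrallyClosed.isIntegral_iff.mp hqi
  have hq0 : 0 ≤ q := by
    rw [hq]
    positivity
  have hz0 : 0 ≤ z := by
    have : ((z : ℚ)) = q := by exact_mod_cast hz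
    exact_mod_cast this ▸ hq0
  refine ⟨z.toNat, ?_⟩
  have htr1 : (ρ 1).trace = (d : ℂ) := by
    rw [map_one, Matrix.trace_one, Fintype.card_fin]
  calc (1 / (ρ 1).trace) * S = (1 / (d : ℂ)) * (c * d) := by rw [htr1, hSc]
    _ = c := by field_simp
    _ = (z.toNat : ℂ) := by
        have hzq : ((z : ℚ)) = q := by rw [← hz]; simp
        rw [hcq, ← hzq]
        exact_mod_cast congrArg (Int.cast : ℤ → ℂ) (Int.toNat_of_nonneg hz0).symm
end

section
/- Let G = ℤ/4ℤ and ω: G → ℕ the weight function with ω(0) = 4, ω(1) = ω(3) = 7, ω(2) = 9. Let A_k be the 4 × 4 matrix with entries (A_k)_{g,h} = C(ω(h - g), k). Then A_1 is non-singular while A_2 is singular; in particular the kernel of A_2 is not contained in the kernel of A_1. -/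
theorem stmt_18
    (ω : ZMod 4 → ℕ) (hω : ω 0 = 4 ∧ ω 1 = 7 ∧ ω 2 = 9 ∧ ω 3 = 7)
    (A : ℕ → Matrix (ZMod 4) (ZMod 4) ℚ)
    (hA : ∀ (j : ℕ) (g h : ZMod 4), A j g h = ((ω (h - g)).choose j : ℚ)) :
    (A 1).det ≠ 0 ∧ (A 2).det = 0 ∧
    ∃ v : ZMod 4 → ℚ, (A 2).mulVec v = 0 ∧ (A 1).mulVec v ≠ 0 := by
  obtain ⟨h0, h1, h2, h3⟩ := hω
  have e1 : A 1 = !![4, 7, 9, 7; 7, 4, 7, 9; 9, 7, 4, 7; 7, 9, 7, 4] := by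
    ext g h
    rw [hA]
    have key : ∀ x : ZMod 4, x = 0 ∨ x = 1 ∨ x = 2 ∨ x = 3 := by decide
    rcases key g with rfl | rfl | rfl | rfl <;> rcases key h with rfl | rfl | rfl | rfl <;>
      simp_all [show (0:ZMod 4) - 1 = 3 from rfl, show (0:ZMod 4) - 2 = 2 from rfl,
        show (0:ZMod 4) - 3 = 1 from rfl, show (1:ZMod 4) - 2 = 3 from rfl,
        show (1:ZMod 4) - 3 = 2 from rfl, show (2:ZMod 4) - 3 = 3 from rfl,
        show (2:ZMod 4) - 1 = 1 from rfl, show (3:ZMod 4) - 1 = 2 from rfl,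
        show (3:ZMod 4) - 2 = 1 from rfl] <;> norm_num [Nat.choose] <;> rfl
  have e2 : A 2 = !![6, 21, 36, 21; 21, 6, 21, 36; 36, 21, 6, 21; 21, 36, 21, 6] := by
    ext g h
    rw [hA]
    have key : ∀ x : ZMod 4, x = 0 ∨ x = 1 ∨ x = 2 ∨ x = 3 := by decide
    rcases key g with rfl | rfl | rfl | rfl <;> rcases key h with rfl | rfl | rfl | rfl <;>
      simp_all [show (0:ZMod 4) - 1 = 3 from rfl, show (0:ZMod 4) - 2 = 2 from rfl,
        show (0:ZMod 4) - 3 = 1 from rfl, show (1:ZMod 4) - 2 = 3 from rfl,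
        show (1:ZMod 4) - 3 = 2 from rfl, show (2:ZMod 4) - 3 = 3 from rfl,
        show (2:ZMod 4) - 1 = 1 from rfl, show (3:ZMod 4) - 1 = 2 from rfl,
        show (3:ZMod 4) - 2 = 1 from rfl] <;> norm_num [Nat.choose] <;> rfl
  refine ⟨?_, ?_, ![1, -1, 1, -1], ?_, ?_⟩
  · rw [e1]
    show (!![4, 7, 9, 7; 7, 4, 7, 9; 9, 7, 4, 7; 7, 9, 7, 4] : Matrix (Fin 4) (Fin 4) ℚ).det ≠ 0
    simp [Matrix.det_succ_row_zero, Fin.sum_univ_succ, Fin.succAbove,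
      show (Fin.castSucc 2 : Fin 4) = 2 from rfl]
    norm_num
  · rw [e2]
    show (!![6, 21, 36, 21; 21, 6, 21, 36; 36, 21, 6, 21; 21, 36, 21, 6] :
      Matrix (Fin 4) (Fin 4) ℚ).det = 0
    simp [Matrix.det_succ_row_zero, Fin.sum_univ_succ, Fin.succAbove,
      show (Fin.castSucc 2 : Fin 4) = 2 from rfl]
    norm_num
  · rw [e2]
    show (!![6, 21, 36, 21; 21, 6, 21, 36; 36, 21, 6, 21; 21, 36, 21, 6] :
      Matrix (Fin 4) (Fin 4) ℚ).mulVec ![1, -1, 1, -1] = 0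
    funext i
    fin_cases i <;>
      simp [Matrix.mulVec, dotProduct, Fin.sum_univ_four] <;> norm_num
  · rw [e1]
    intro hcon
    have hc : (!![4, 7, 9, 7; 7, 4, 7, 9; 9, 7, 4, 7; 7, 9, 7, 4] :
        Matrix (Fin 4) (Fin 4) ℚ).mulVec ![1, -1, 1, -1] = 0 := hcon
    have := congrFun hc 0
    simp [Matrix.mulVec, dotProduct, Fin.sum_univ_four] at this
    norm_num at this
end

section
/- Let n = 3, m = 2, k = 2, and let M be the 12 × 8 restriction matrix over ℚ with rows indexed by pairs (i, j) where i is a 2-element subset of Fin 3 (in increasing order) and j ∈ (Fin 2)^2, columns indexed by functions f : Fin 3 → Fin 2, and entry 1 exactly when f restricted to i equals j. Then the kernel of M is one-dimensional, spanned by the vector whose entry at f is (-1)^{f(0)+f(1)+f(2)}. -/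
lemma emb01 (h : ({0,1} : Finset (Fin 3)).card = 2) :
    ⇑(({0,1} : Finset (Fin 3)).orderEmbOfFin h) = ![0,1] :=
  (Finset.orderEmbOfFin_unique h (by decide)
    (by intro a b hab; fin_cases a <;> fin_cases b <;> simp_all)).symm

lemma emb02 (h : ({0,2} : Finset (Fin 3)).card = 2) :
    ⇑(({0,2} : Finset (Fin 3)).orderEmbOfFin h) = ![0,2] :=
  (Finset.orderEmbOfFin_unique h (by decide)
    (by intro a b hab; fin_cases a <;> fin_cases b <;> simp_all)).symm

lemma emb12 (h : ({1,2} : Finset (Fin 3)).card = 2) :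
    ⇑(({1,2} : Finset (Fin 3)).orderEmbOfFin h) = ![1,2] :=
  (Finset.orderEmbOfFin_unique h (by decide)
    (by intro a b hab; fin_cases a <;> fin_cases b <;> simp_all)).symm

lemma rowsum (P : (Fin 3 → Fin 2) → Prop) [DecidablePred P] (v : (Fin 3 → Fin 2) → ℚ)
    (f0 f1 : Fin 3 → Fin 2) (hne : f0 ≠ f1) (hf : Finset.univ.filter P = {f0, f1}) :
    ∑ f, (if P f then (1:ℚ) else 0) * v f = v f0 + v f1 := by
  have h1 : ∀ f, (if P f then (1:ℚ) else 0) * v f = if P f then v f else 0 := by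
    intro f; by_cases h : P f <;> simp [h]
  simp_rw [h1, ← Finset.sum_filter, hf, Finset.sum_pair hne]

lemma threesets : ∀ s : Finset (Fin 3), s.card = 2 → s = {0,1} ∨ s = {0,2} ∨ s = {1,2} := by
  decide

theorem stmt_19
    (M : Matrix ({s : Finset (Fin 3) // s.card = 2} × (Fin 2 → Fin 2))
          (Fin 3 → Fin 2) ℚ)
    (hM : ∀ p f, M p f =
      if ∀ a : Fin 2, f (p.1.1.orderEmbOfFin p.1.2 a) = p.2 a then 1 else 0) :
    LinearMap.ker M.mulVecLin =
      Submodule.span ℚ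
        {fun f : Fin 3 → Fin 2 =>
          (-1 : ℚ) ^ ((f 0 : ℕ) + (f 1 : ℕ) + (f 2 : ℕ))} := by
  set W : (Fin 3 → Fin 2) → ℚ :=
    fun f => (-1 : ℚ) ^ ((f 0 : ℕ) + (f 1 : ℕ) + (f 2 : ℕ)) with hW
  apply le_antisymm
  · intro v hv
    rw [LinearMap.mem_ker] at hv
    have key : ∀ (s : Finset (Fin 3)) (hs : s.card = 2) (j : Fin 2 → Fin 2),
        ∑ f, (if ∀ a : Fin 2, f (s.orderEmbOfFin hs a) = j a then (1:ℚ) else 0) * v f = 0 := by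
      intro s hs j
      have h := congrFun hv (⟨s, hs⟩, j)
      simpa [Matrix.mulVecLin_apply, Matrix.mulVec, dotProduct, hM] using h
    have e1 := key {0,1} (by decide) ![0,0]
    rw [emb01, rowsum _ v ![0,0,0] ![0,0,1] (by decide) (by decide)] at e1
    have e2 := key {0,1} (by decide) ![0,1]
    rw [emb01, rowsum _ v ![0,1,0] ![0,1,1] (by decide) (by decide)] at e2
    have e3 := key {0,1} (by decide) ![1,0]
    rw [emb01, rowsum _ v ![1,0,0] ![1,0,1] (by decide) (by decide)] at e3
    have e4 := key {0,2} (by decide) ![0,0]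
    rw [emb02, rowsum _ v ![0,0,0] ![0,1,0] (by decide) (by decide)] at e4
    have e5 := key {1,2} (by decide) ![0,0]
    rw [emb12, rowsum _ v ![0,0,0] ![1,0,0] (by decide) (by decide)] at e5
    have e6 := key {1,2} (by decide) ![1,0]
    rw [emb12, rowsum _ v ![0,1,0] ![1,1,0] (by decide) (by decide)] at e6
    have e7 := key {1,2} (by decide) ![1,1]
    rw [emb12, rowsum _ v ![0,1,1] ![1,1,1] (by decide) (by decide)] at e7
    rw [Submodule.mem_span_singleton]
    refine ⟨v ![0,0,0], funext fun f => ?_⟩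
    have hf : f = ![f 0, f 1, f 2] := by funext i; fin_cases i <;> rfl
    have two : ∀ x : Fin 2, x = 0 ∨ x = 1 := by decide
    rcases two (f 0) with h0|h0 <;> rcases two (f 1) with h1|h1 <;> rcases two (f 2) with h2|h2 <;>
      rw [hf, h0, h1, h2] <;>
      simp only [Pi.smul_apply, smul_eq_mul, hW, Matrix.cons_val_zero, Matrix.cons_val_one,
        Matrix.head_cons, Matrix.cons_val_two, Matrix.tail_cons] <;>
      norm_num <;> linarith
  · rw [Submodule.span_le, Set.singleton_subset_iff, SetLike.mem_coe, LinearMap.mem_ker]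
    funext p
    obtain ⟨⟨s, hs⟩, j⟩ := p
    simp only [Matrix.mulVecLin_apply, Matrix.mulVec, dotProduct, hM, Pi.zero_apply]
    rcases threesets s hs with rfl | rfl | rfl
    · rw [emb01]
      fin_cases j
      · rw [rowsum _ _ ![0,0,0] ![0,0,1] (by decide) (by decide)]; norm_num [hW, Matrix.cons_val_two, Matrix.tail_cons, Matrix.head_cons]
      · rw [rowsum _ _ ![0,1,0] ![0,1,1] (by decide) (by decide)]; norm_num [hW, Matrix.cons_val_two, Matrix.tail_cons, Matrix.head_cons]
      · rw [rowsum _ _ ![1,0,0] ![1,0,1] (by decide) (by decide)]; norm_num [hW, Matrix.cons_val_two, Matrix.tail_cons, Matrix.head_cons]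
      · rw [rowsum _ _ ![1,1,0] ![1,1,1] (by decide) (by decide)]; norm_num [hW, Matrix.cons_val_two, Matrix.tail_cons, Matrix.head_cons]
    · rw [emb02]
      fin_cases j
      · rw [rowsum _ _ ![0,0,0] ![0,1,0] (by decide) (by decide)]; norm_num [hW, Matrix.cons_val_two, Matrix.tail_cons, Matrix.head_cons]
      · rw [rowsum _ _ ![0,0,1] ![0,1,1] (by decide) (by decide)]; norm_num [hW, Matrix.cons_val_two, Matrix.tail_cons, Matrix.head_cons]
      · rw [rowsum _ _ ![1,0,0] ![1,1,0] (by decide) (by decide)]; norm_num [hW, Matrix.cons_val_two, Matrix.tail_cons, Matrix.head_cons]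
      · rw [rowsum _ _ ![1,0,1] ![1,1,1] (by decide) (by decide)]; norm_num [hW, Matrix.cons_val_two, Matrix.tail_cons, Matrix.head_cons]
    · rw [emb12]
      fin_cases j
      · rw [rowsum _ _ ![0,0,0] ![1,0,0] (by decide) (by decide)]; norm_num [hW, Matrix.cons_val_two, Matrix.tail_cons, Matrix.head_cons]
      · rw [rowsum _ _ ![0,0,1] ![1,0,1] (by decide) (by decide)]; norm_num [hW, Matrix.cons_val_two, Matrix.tail_cons, Matrix.head_cons]
      · rw [rowsum _ _ ![0,1,0] ![1,1,0] (by decide) (by decide)]; norm_num [hW, Matrix.cons_val_two, Matrix.tail_cons, Matrix.head_cons]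
      · rw [rowsum _ _ ![0,1,1] ![1,1,1] (by decide) (by decide)]; norm_num [hW, Matrix.cons_val_two, Matrix.tail_cons, Matrix.head_cons]
end
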